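/- For any continuous function $f$ from the perfect binary tree $\mathcal{T}_k$ of height $k$ (as a metric graph) to $\mathbb{R}$, there exists $x \in \mathbb{R}$ such that $f$ attains the value $x$ on at least $\lceil k/2 \rceil$ distinct edges of $\mathcal{T}_k$. -/

import Mathlib

noncomputable section

/-- Edges of the perfect binary tree `𝒯 k` of height `k`: an edge is indexed by the
binary string recording the branching choices above it.  The empty string is the stem
edge at the root (which therefore has degree one); strings of length `d` index the
`2^d` edges at depth `d`. -/
abbrev PBTEdge (k : ℕ) : Type := {l : List Bool // l.length < k}

/-- The gluing relation on `(edge, parameter)` pairs: the endpoint `t = 1` of an edge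
`l` is identified with the endpoint `t = 0` of each of its two child edges `l ++ [b]`. -/
def PBTRel (k : ℕ) (p q : PBTEdge k × unitInterval) : Prop :=
  ∃ b : Bool, q.1.1 = p.1.1 ++ [b] ∧ p.2 = 1 ∧ q.2 = 0

/-- The perfect binary tree of height `k` as a topological space (the metric graph with
unit edges): the disjoint union of the closed unit edges with endpoints glued. -/
abbrev PBT (k : ℕ) : Type := Quot (PBTRel k)

/-- The point of `𝒯 k` at parameter `t` along edge `e`. -/
def PBT.pt {k : ℕ} (e : PBTEdge k) (t : unitInterval) : PBT k := Quot.mk _ (e, t)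

/-- `f` attains the value `x` on the (closed) edge `e` of `𝒯 k`. -/
def AttainsOn {k : ℕ} (f : PBT k → ℝ) (e : PBTEdge k) (x : ℝ) : Prop :=
  ∃ t : unitInterval, f (PBT.pt e t) = x

/-- `f` attains some single value `x` on at least `n` distinct edges of `𝒯 k`. -/
def AttainsAtLeast {k : ℕ} (f : PBT k → ℝ) (n : ℕ) : Prop :=
  ∃ x : ℝ, ∃ s : Finset (PBTEdge k), n ≤ s.card ∧ ∀ e ∈ s, AttainsOn f e x

/-- `u k` is the largest number `n` (the paper's "smallest natural number" bounding the
guarantee) such that every continuous real-valued function on `𝒯 k` attains some value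
on at least `n` distinct edges. -/
def uPBT (k : ℕ) : ℕ :=
  sSup {n : ℕ | ∀ f : PBT k → ℝ, Continuous f → AttainsAtLeast f n}

/-! ### Auxiliary machinery

We record the values of `f` at the vertices of the tree (`wf`), show via the
intermediate value theorem that an edge attains every value between its endpoint
values, and then prove a purely combinatorial statement by induction: descending two
levels in the tree gains one more edge on which a common value is attained (a
cutwidth-style argument using three pendant grandchild subtrees and a median choice). -/

/-- The value of `f` at the vertex indexed by the binary string `l` (the top endpoint
of edge `l` if `l.length < k`, otherwise the bottom endpoint of its parent edge). -/
def wf (k : ℕ) (f : PBT k → ℝ) (l : List Bool) : ℝ :=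
  if h : l.length < k then f (PBT.pt ⟨l, h⟩ 0)
  else if h2 : l.dropLast.length < k then f (PBT.pt ⟨l.dropLast, h2⟩ 1) else 0

lemma w_top (k : ℕ) (f : PBT k → ℝ) (e : PBTEdge k) : wf k f e.1 = f (PBT.pt e 0) := by
  unfold wf; rw [dif_pos e.2]

lemma w_concat (k : ℕ) (f : PBT k → ℝ) (l : List Bool) (hl : l.length < k) (b : Bool) :
    wf k f (l ++ [b]) = f (PBT.pt ⟨l, hl⟩ 1) := by
  unfold wf
  by_cases h1 : (l ++ [b]).length < k
  · rw [dif_pos h1]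
    exact (congrArg f (Quot.sound ⟨b, rfl, rfl, rfl⟩)).symm
  · rw [dif_neg h1]
    simp only [List.dropLast_concat]
    rw [dif_pos hl]

lemma w_indep (k : ℕ) (f : PBT k → ℝ) (l : List Bool) (hl : l.length < k) (b : Bool) :
    wf k f (l ++ [b]) = wf k f (l ++ [true]) := by
  rw [w_concat k f l hl b, w_concat k f l hl true]

lemma pt_cont (k : ℕ) (e : PBTEdge k) : Continuous (fun t => PBT.pt e t) :=
  continuous_quot_mk.comp (Continuous.prodMk_right e)

/-- Every value between the endpoint values of an edge is attained on that edge. -/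
lemma attains_of_uIcc (k : ℕ) (f : PBT k → ℝ) (hf : Continuous f) (e : PBTEdge k) (x : ℝ)
    (hx : x ∈ Set.uIcc (wf k f e.1) (wf k f (e.1 ++ [true]))) : AttainsOn f e x := by
  have h0 : wf k f e.1 = f (PBT.pt e 0) := w_top k f e
  have h1 : wf k f (e.1 ++ [true]) = f (PBT.pt e 1) := w_concat k f e.1 e.2 true
  set φ : ℝ → ℝ := fun t => f (PBT.pt e (Set.projIcc 0 1 zero_le_one t)) with hφdef
  have hφ : Continuous φ := hf.comp ((pt_cont k e).comp continuous_projIcc)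
  have hφ0 : φ 0 = f (PBT.pt e 0) := by
    simp only [hφdef, Set.projIcc_left]; rfl
  have hφ1 : φ 1 = f (PBT.pt e 1) := by
    simp only [hφdef, Set.projIcc_right]; rfl
  have hsub := intermediate_value_uIcc (a := (0:ℝ)) (b := 1) (hφ.continuousOn)
  have hx' : x ∈ Set.uIcc (φ 0) (φ 1) := by rw [hφ0, hφ1, ← h0, ← h1]; exact hx
  obtain ⟨t, _, ht⟩ := hsub hx'
  exact ⟨Set.projIcc 0 1 zero_le_one t, ht⟩

lemma uIcc_step (a b c x : ℝ) (h1 : x ∈ Set.uIcc b c) (h2 : x ∉ Set.uIcc a b) :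
    x ∈ Set.uIcc a c := by
  simp only [Set.mem_uIcc] at *
  push_neg at h2
  obtain ⟨p2, q2⟩ := h2
  rcases h1 with ⟨u, v⟩ | ⟨u, v⟩
  · exact Or.inl ⟨(q2 u).le, v⟩
  · refine Or.inr ⟨u, ?_⟩
    by_contra hh
    push_neg at hh
    exact absurd (p2 hh.le) (not_lt.mpr v)

/-- Discrete intermediate value theorem along an ancestor chain: if `x` lies between
the vertex values at `q` and at an ancestor `r`, then some edge on the chain from `r`
to `q` has `x` between its endpoint values. -/
lemma upchain (k : ℕ) (f : PBT k → ℝ) (x : ℝ) :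
    ∀ n (q : List Bool), q.length = n → q.length ≤ k → ∀ r, r <+: q → r ≠ q →
      x ∈ Set.uIcc (wf k f q) (wf k f r) →
      ∃ s, r <+: s ∧ s <+: q ∧ s ≠ q ∧ x ∈ Set.uIcc (wf k f s) (wf k f (s ++ [true])) := by
  intro n
  induction n using Nat.strong_induction_on with
  | _ n IH =>
    intro q hqn hqk r hr hrne hx
    have hqne : q ≠ [] := by
      rintro rfl
      exact hrne (List.prefix_nil.mp hr)
    set s0 := q.dropLast with hs0
    have hlen : s0.length = q.length - 1 := List.length_dropLast
    have hqpos : 0 < q.length := List.length_pos_iff.mpr hqne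
    have hs0k : s0.length < k := by omega
    have hq : s0 ++ [q.getLast hqne] = q := List.dropLast_append_getLast hqne
    have hwq : wf k f q = wf k f (s0 ++ [true]) := by
      conv_lhs => rw [← hq]
      exact w_indep k f s0 hs0k _
    have hrlen : r.length < q.length := by
      have h1 := hr.length_le
      rcases lt_or_eq_of_le h1 with h | h
      · exact h
      · exact absurd (hr.eq_of_length h) hrne
    have hrs0 : r <+: s0 := List.prefix_of_prefix_length_le hr (List.dropLast_prefix q) (by omega)
    by_cases hmem : x ∈ Set.uIcc (wf k f s0) (wf k f (s0 ++ [true]))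
    · exact ⟨s0, hrs0, List.dropLast_prefix q, by intro h; rw [h] at hlen; omega, hmem⟩
    · have hx' : x ∈ Set.uIcc (wf k f s0) (wf k f r) := by
        rw [hwq] at hx
        exact uIcc_step _ _ _ _ hx hmem
      have hrs0ne : r ≠ s0 := by
        rintro rfl
        rw [Set.uIcc_self, Set.mem_singleton_iff] at hx'
        exact hmem (hx' ▸ Set.left_mem_uIcc)
      obtain ⟨s, h1, h2, h3, h4⟩ := IH s0.length (by omega) s0 rfl (by omega) r hrs0 hrs0ne hx'
      exact ⟨s, h1, h2.trans (List.dropLast_prefix q),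
        fun h => by have := h2.length_le; rw [h] at this; omega, h4⟩

/-- From a low vertex and a high vertex, both below `p`, get a crossing edge that is a
strict prefix of one of them. -/
lemma extra_edge (k : ℕ) (f : PBT k → ℝ) (x : ℝ) (p ql qh : List Bool)
    (hql : p <+: ql) (hqh : p <+: qh) (hlql : ql.length ≤ k) (hlqh : qh.length ≤ k)
    (hne1 : p ≠ ql) (hne2 : p ≠ qh) (hlo : wf k f ql ≤ x) (hhi : x ≤ wf k f qh) :
    ∃ s, p <+: s ∧ ((s <+: ql ∧ s ≠ ql) ∨ (s <+: qh ∧ s ≠ qh)) ∧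
      x ∈ Set.uIcc (wf k f s) (wf k f (s ++ [true])) := by
  rcases le_total (wf k f p) x with hp | hp
  · obtain ⟨s, h1, h2, h3, h4⟩ := upchain k f x qh.length qh rfl hlqh p hqh hne2
      (by rw [Set.mem_uIcc]; right; exact ⟨hp, hhi⟩)
    exact ⟨s, h1, Or.inr ⟨h2, h3⟩, h4⟩
  · obtain ⟨s, h1, h2, h3, h4⟩ := upchain k f x ql.length ql rfl hlql p hql hne1
      (by rw [Set.mem_uIcc]; left; exact ⟨hlo, hp⟩)
    exact ⟨s, h1, Or.inl ⟨h2, h3⟩, h4⟩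

/-- The inductive step: the crossing edges of a "median" grandchild subtree plus one
extra crossing edge found outside it. -/
lemma key (k : ℕ) (f : PBT k → ℝ) (p : List Bool) (n : ℕ) (hk : p.length + (n+3) ≤ k)
    (pm pi pj : List Bool)
    (hppm : p <+: pm) (hppi : p <+: pi) (hppj : p <+: pj)
    (hlm : pm.length = p.length + 2) (hli : pi.length = p.length + 2)
    (hlj : pj.length = p.length + 2)
    (him : pi ≠ pm) (hjm : pj ≠ pm)
    (xm : ℝ) (Em : Finset (PBTEdge k))
    (hcard : (n+2)/2 ≤ Em.card)
    (hprop : ∀ e ∈ Em, pm <+: e.1 ∧ e.1.length < p.length + (n+3))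
    (hcross : ∀ e ∈ Em, xm ∈ Set.uIcc (wf k f e.1) (wf k f (e.1 ++ [true])))
    (qlow qhigh : List Bool) (hq1 : pi <+: qlow) (hq2 : pj <+: qhigh)
    (hlen1 : qlow.length ≤ p.length + (n+3)) (hlen2 : qhigh.length ≤ p.length + (n+3))
    (hlo : wf k f qlow ≤ xm) (hhi : xm ≤ wf k f qhigh) :
    ∃ (x : ℝ) (E : Finset (PBTEdge k)), ((n+3)+1)/2 ≤ E.card ∧
      (∀ e ∈ E, p <+: e.1 ∧ e.1.length < p.length + (n+3)) ∧
      ∀ e ∈ E, x ∈ Set.uIcc (wf k f e.1) (wf k f (e.1 ++ [true])) := by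
  have hpql : p <+: qlow := hppi.trans hq1
  have hpqh : p <+: qhigh := hppj.trans hq2
  have hlq1 : qlow.length ≤ k := by omega
  have hlq2 : qhigh.length ≤ k := by omega
  have hne1 : p ≠ qlow := by
    intro h; have := hq1.length_le; rw [← h] at this; omega
  have hne2 : p ≠ qhigh := by
    intro h; have := hq2.length_le; rw [← h] at this; omega
  obtain ⟨s, hps, hor, hcr⟩ :=
    extra_edge k f xm p qlow qhigh hpql hpqh hlq1 hlq2 hne1 hne2 hlo hhi
  have hslen : s.length < p.length + (n+3) := by
    rcases hor with ⟨h1, h2⟩ | ⟨h1, h2⟩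
    · have ha := h1.length_le
      have hb : s.length ≠ qlow.length := fun hh => h2 (h1.eq_of_length hh)
      omega
    · have ha := h1.length_le
      have hb : s.length ≠ qhigh.length := fun hh => h2 (h1.eq_of_length hh)
      omega
  have hsk : s.length < k := by omega
  have hnotmem : (⟨s, hsk⟩ : PBTEdge k) ∉ Em := by
    intro hmem
    obtain ⟨hpre, _⟩ := hprop ⟨s, hsk⟩ hmem
    rcases hor with ⟨h1, _⟩ | ⟨h1, _⟩
    · have h3 : pm <+: qlow := hpre.trans h1
      have h4 : pm <+: pi := List.prefix_of_prefix_length_le h3 hq1 (by omega)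
      exact him (h4.eq_of_length (by omega)).symm
    · have h3 : pm <+: qhigh := hpre.trans h1
      have h4 : pm <+: pj := List.prefix_of_prefix_length_le h3 hq2 (by omega)
      exact hjm (h4.eq_of_length (by omega)).symm
  refine ⟨xm, insert ⟨s, hsk⟩ Em, ?_, ?_, ?_⟩
  · rw [Finset.card_insert_of_notMem hnotmem]; omega
  · intro e he
    rcases Finset.mem_insert.mp he with rfl | he
    · exact ⟨hps, hslen⟩
    · obtain ⟨h1, h2⟩ := hprop e he
      exact ⟨hppm.trans h1, h2⟩
  · intro e he
    rcases Finset.mem_insert.mp he with rfl | he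
    · exact hcr
    · exact hcross e he

/-- Main combinatorial lemma: in the subtree of height `h` hanging at prefix `p`,
some value is between the endpoint values of at least `⌈h/2⌉` edges. -/
lemma main_lemma (k : ℕ) (f : PBT k → ℝ) :
    ∀ h, ∀ p : List Bool, p.length + h ≤ k →
      ∃ (x : ℝ) (E : Finset (PBTEdge k)), (h+1)/2 ≤ E.card ∧
        (∀ e ∈ E, p <+: e.1 ∧ e.1.length < p.length + h) ∧
        ∀ e ∈ E, x ∈ Set.uIcc (wf k f e.1) (wf k f (e.1 ++ [true])) := by
  intro h
  induction h using Nat.strong_induction_on with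
  | _ h IH =>
    intro p hp
    by_cases h0 : h = 0
    · subst h0
      exact ⟨0, ∅, by simp, by simp, by simp⟩
    by_cases h2 : h ≤ 2
    · have hpk : p.length < k := by omega
      refine ⟨wf k f p, {⟨p, hpk⟩}, ?_, ?_, ?_⟩
      · simp only [Finset.card_singleton]; omega
      · intro e he
        rw [Finset.mem_singleton] at he
        subst he
        exact ⟨List.prefix_refl _, by simp; omega⟩
      · intro e he
        rw [Finset.mem_singleton] at he
        subst he
        exact Set.left_mem_uIcc
    · obtain ⟨n, rfl⟩ : ∃ n, h = n + 3 := ⟨h - 3, by omega⟩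
      have sub : ∀ P : List Bool, p <+: P → P.length = p.length + 2 →
          ∃ (x : ℝ) (E : Finset (PBTEdge k)) (ql qh : List Bool), ((n+2)/2 ≤ E.card) ∧
            (∀ e ∈ E, P <+: e.1 ∧ e.1.length < p.length + (n+3)) ∧
            (∀ e ∈ E, x ∈ Set.uIcc (wf k f e.1) (wf k f (e.1 ++ [true]))) ∧
            P <+: ql ∧ P <+: qh ∧ ql.length ≤ p.length + (n+3) ∧
            qh.length ≤ p.length + (n+3) ∧ wf k f ql ≤ x ∧ x ≤ wf k f qh := by
        intro P hpP hPlen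
        obtain ⟨x, E, hc, hpr, hcr⟩ := IH (n+1) (by omega) P (by omega)
        have hpr' : ∀ e ∈ E, P <+: e.1 ∧ e.1.length < p.length + (n+3) := by
          intro e he; obtain ⟨a, b⟩ := hpr e he; exact ⟨a, by omega⟩
        have hcpos : 0 < E.card := by omega
        obtain ⟨e0, he0⟩ := Finset.card_pos.mp hcpos
        rcases Set.mem_uIcc.mp (hcr e0 he0) with ⟨ha, hb⟩ | ⟨ha, hb⟩
        · exact ⟨x, E, e0.1, e0.1 ++ [true], hc, hpr', hcr, (hpr' e0 he0).1,
            (hpr' e0 he0).1.trans (List.prefix_append _ _),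
            by have := (hpr' e0 he0).2; omega,
            by have := (hpr' e0 he0).2; simp; omega, ha, hb⟩
        · exact ⟨x, E, e0.1 ++ [true], e0.1, hc, hpr', hcr,
            (hpr' e0 he0).1.trans (List.prefix_append _ _), (hpr' e0 he0).1,
            by have := (hpr' e0 he0).2; simp; omega,
            by have := (hpr' e0 he0).2; omega, ha, hb⟩
      obtain ⟨x1, E1, ql1, qh1, c1, pr1, cr1, pq1l, pq1h, len1l, len1h, lo1, hi1⟩ :=
        sub (p ++ [false, false]) (List.prefix_append _ _) (by simp)
      obtain ⟨x2, E2, ql2, qh2, c2, pr2, cr2, pq2l, pq2h, len2l, len2h, lo2, hi2⟩ :=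
        sub (p ++ [false, true]) (List.prefix_append _ _) (by simp)
      obtain ⟨x3, E3, ql3, qh3, c3, pr3, cr3, pq3l, pq3h, len3l, len3h, lo3, hi3⟩ :=
        sub (p ++ [true, false]) (List.prefix_append _ _) (by simp)
      have L1 : (p ++ [false, false]).length = p.length + 2 := by simp
      have L2 : (p ++ [false, true]).length = p.length + 2 := by simp
      have L3 : (p ++ [true, false]).length = p.length + 2 := by simp
      have ne12 : (p ++ [false, false] : List Bool) ≠ p ++ [false, true] := by simp
      have ne13 : (p ++ [false, false] : List Bool) ≠ p ++ [true, false] := by simp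
      have ne21 : (p ++ [false, true] : List Bool) ≠ p ++ [false, false] := by simp
      have ne23 : (p ++ [false, true] : List Bool) ≠ p ++ [true, false] := by simp
      have ne31 : (p ++ [true, false] : List Bool) ≠ p ++ [false, false] := by simp
      have ne32 : (p ++ [true, false] : List Bool) ≠ p ++ [false, true] := by simp
      have pa1 : p <+: p ++ [false, false] := List.prefix_append _ _
      have pa2 : p <+: p ++ [false, true] := List.prefix_append _ _
      have pa3 : p <+: p ++ [true, false] := List.prefix_append _ _
      rcases le_total x1 x2 with h12 | h12
      · rcases le_total x2 x3 with h23 | h23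
        · -- x1 ≤ x2 ≤ x3 : m = 2, i = 1, j = 3
          exact key k f p n hp _ _ _ pa2 pa1 pa3 L2 L1 L3 ne12 ne32 x2 E2 c2 pr2 cr2
            ql1 qh3 pq1l pq3h len1l len3h (le_trans lo1 h12) (le_trans h23 hi3)
        · rcases le_total x1 x3 with h13 | h13
          · -- x1 ≤ x3 ≤ x2 : m = 3, i = 1, j = 2
            exact key k f p n hp _ _ _ pa3 pa1 pa2 L3 L1 L2 ne13 ne23 x3 E3 c3 pr3 cr3
              ql1 qh2 pq1l pq2h len1l len2h (le_trans lo1 h13) (le_trans h23 hi2)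
          · -- x3 ≤ x1 ≤ x2 : m = 1, i = 3, j = 2
            exact key k f p n hp _ _ _ pa1 pa3 pa2 L1 L3 L2 ne31 ne21 x1 E1 c1 pr1 cr1
              ql3 qh2 pq3l pq2h len3l len2h (le_trans lo3 h13) (le_trans h12 hi2)
      · rcases le_total x1 x3 with h13 | h13
        · -- x2 ≤ x1 ≤ x3 : m = 1, i = 2, j = 3
          exact key k f p n hp _ _ _ pa1 pa2 pa3 L1 L2 L3 ne21 ne31 x1 E1 c1 pr1 cr1
            ql2 qh3 pq2l pq3h len2l len3h (le_trans lo2 h12) (le_trans h13 hi3)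
        · rcases le_total x2 x3 with h23 | h23
          · -- x2 ≤ x3 ≤ x1 : m = 3, i = 2, j = 1
            exact key k f p n hp _ _ _ pa3 pa2 pa1 L3 L2 L1 ne23 ne13 x3 E3 c3 pr3 cr3
              ql2 qh1 pq2l pq1h len2l len1h (le_trans lo2 h23) (le_trans h13 hi1)
          · -- x3 ≤ x2 ≤ x1 : m = 2, i = 3, j = 1
            exact key k f p n hp _ _ _ pa2 pa3 pa1 L2 L3 L1 ne32 ne12 x2 E2 c2 pr2 cr2
              ql3 qh1 pq3l pq1h len3l len1h (le_trans lo3 h23) (le_trans h12 hi1)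

/-- Every continuous function on the perfect binary tree `𝒯 k` attains
some value on at least `⌈k/2⌉` distinct edges. -/
theorem continuous_attains_on_many_edges (k : ℕ) (f : PBT k → ℝ) (hf : Continuous f) :
    AttainsAtLeast f ((k + 1) / 2) := by
  obtain ⟨x, E, hc, _, hcr⟩ := main_lemma k f k [] (by simp)
  exact ⟨x, E, hc, fun e he => attains_of_uIcc k f hf e x (hcr e he)⟩

end
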